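/- There exists a function f ∈ L^2(𝕋) such that for every positive integer n and every ε > 0, the function (z−1)^n f(z) is not essentially bounded on B_ε(1) ∩ 𝕋. Concretely, one may take f = ∑_{k>2} k!·1_{X_k}, where X_k is an arc centred at a point x_k ∈ 𝕋 with |x_k − 1| = 1/k and of normalized measure 1/(k!·k), the arcs being pairwise disjoint: then ‖f‖²_{L²} = ∑_{k>2} 1/k² < ∞ while |f(x_k)(x_k−1)^n| = k!/k^n → ∞ for each n. -/

import Mathlib

open MeasureTheory Complex Filter Set Metric Topology
open scoped ENNReal NNReal ComplexConjugate

noncomputable section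

/-- The open unit disk in ℂ. -/
def UnitDisk : Set ℂ := Metric.ball 0 1

/-- The unit circle in ℂ. -/
def UnitCircle : Set ℂ := Metric.sphere 0 1

/-- Normalized Lebesgue (arclength) measure on the unit circle, as a measure on ℂ. -/
def circleM : Measure ℂ :=
  (ENNReal.ofReal (2 * Real.pi))⁻¹ •
    Measure.map (fun θ : ℝ => Complex.exp (θ * Complex.I))
      (volume.restrict (Set.Ioc 0 (2 * Real.pi)))

/-- `f` is the a.e. radial boundary value function of `F`. -/
def IsBoundaryValue (F f : ℂ → ℂ) : Prop :=
  ∀ᵐ ζ ∂circleM, Tendsto (fun r : ℝ => F ((r : ℂ) * ζ)) (𝓝[<] (1 : ℝ)) (𝓝 (f ζ))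

/-- Membership of an analytic function on the disk in the Hardy space `H^p`. -/
def MemHp (p : ℝ≥0∞) (F : ℂ → ℂ) : Prop :=
  DifferentiableOn ℂ F UnitDisk ∧
    ∃ C : ℝ≥0∞, C ≠ ⊤ ∧ ∀ r : ℝ, 0 ≤ r → r < 1 →
      eLpNorm (fun ζ => F ((r : ℂ) * ζ)) p circleM ≤ C

/-- A boundary function lies in the Hardy space `H^p(𝕋)`. -/
def MemHpBdry (p : ℝ≥0∞) (f : ℂ → ℂ) : Prop :=
  ∃ F : ℂ → ℂ, MemHp p F ∧ IsBoundaryValue F f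

/-- All negative Fourier coefficients of `f` vanish. -/
def NegCoeffVanish (f : ℂ → ℂ) : Prop :=
  ∀ n : ℕ, ∫ ζ, f ζ * ζ ^ (n + 1) ∂circleM = 0

/-- The Hardy space `H^2(𝕋)`, viewed as the set of boundary functions in `L^2(𝕋)`
whose negative Fourier coefficients vanish. -/
def MemH2 (f : ℂ → ℂ) : Prop :=
  MemLp f 2 circleM ∧ NegCoeffVanish f

/-- The Riesz projection of an integrable function on the circle, as an analytic
function on the unit disk: `(P f)(z) = ∫ f(ζ)/(1 - conj ζ · z) dm(ζ)`. -/
def RieszProj (f : ℂ → ℂ) : ℂ → ℂ :=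
  fun z => ∫ ζ, f ζ / (1 - conj ζ * z) ∂circleM

/-- `g` is essentially bounded (w.r.t. circle measure) on the set `S`. -/
def EssBddOn (g : ℂ → ℂ) (S : Set ℂ) : Prop :=
  ∃ C : ℝ, ∀ᵐ ζ ∂circleM, ζ ∈ S → ‖g ζ‖ ≤ C

/-- `ζ` is a pole of `g`: `g` is not essentially bounded on any arc around `ζ`. -/
def IsPole (g : ℂ → ℂ) (ζ : ℂ) : Prop :=
  ∀ ε > (0 : ℝ), ¬ EssBddOn g (Metric.ball ζ ε)

/-- `g` has a pole of order exactly `n` at `ζ`. -/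
def PoleOrder (g : ℂ → ℂ) (ζ : ℂ) (n : ℕ) : Prop :=
  (∃ ε > (0 : ℝ), EssBddOn (fun z => (z - ζ) ^ n * g z) (Metric.ball ζ ε)) ∧
    ∀ i < n, ¬ ∃ ε > (0 : ℝ), EssBddOn (fun z => (z - ζ) ^ i * g z) (Metric.ball ζ ε)

/-- A function analytic on the disk is analytic at a boundary point `ζ` if it
extends analytically to a neighbourhood of `ζ`. -/
def AnalyticAtBdry (U : ℂ → ℂ) (ζ : ℂ) : Prop :=
  ∃ ε > (0 : ℝ), ∃ G : ℂ → ℂ, DifferentiableOn ℂ G (Metric.ball ζ ε) ∧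
    Set.EqOn G U (Metric.ball ζ ε ∩ UnitDisk)

/-- The product of Toeplitz operators `T_u T_v` (where `U` is the analytic symbol,
given as a function on the disk, and `v ∈ L²(𝕋)`) is bounded on `H²(𝕋)`:
its range lies in `H²(𝕋)` and it satisfies a norm bound there. -/
def BoundedToeplitzProd (U v : ℂ → ℂ) : Prop :=
  ∃ C : ℝ≥0∞, C ≠ ⊤ ∧ ∀ f : ℂ → ℂ, MemH2 f →
    ∃ g : ℂ → ℂ, MemH2 g ∧
      IsBoundaryValue (fun z => U z * RieszProj (fun ζ => v ζ * f ζ) z) g ∧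
      eLpNorm g 2 circleM ≤ C * eLpNorm f 2 circleM

/-- The Poisson extension of an integrable real function on the circle, at `w ∈ 𝔻`. -/
def Poisson (ρ : ℂ → ℝ) (w : ℂ) : ℝ :=
  ∫ ζ, ((1 - ‖w‖ ^ 2) / ‖ζ - w‖ ^ 2) * ρ ζ ∂circleM

/-- An outer function on the unit disk. -/
def IsOuterFn (G : ℂ → ℂ) : Prop :=
  ∃ c : ℂ, ‖c‖ = 1 ∧ ∃ φ : ℂ → ℝ,
    Integrable (fun ζ => Real.log (φ ζ)) circleM ∧
    ∀ z ∈ UnitDisk, G z =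
      c * Complex.exp (∫ ζ, ((ζ + z) / (ζ - z)) * (Real.log (φ ζ) : ℂ) ∂circleM)

/-- A boundary function in `H²(𝕋)` is outer if its analytic extension to the disk
(given by the Riesz projection) is an outer function. -/
def IsOuterBdry (f : ℂ → ℂ) : Prop := IsOuterFn (RieszProj f)

end



noncomputable section

namespace PoleAux

def hgt (k : ℕ) : ℕ := 2 ^ (k ^ 2)

def dlt (k : ℕ) : ℝ := ((2 : ℝ) ^ (k + 2 * k ^ 2))⁻¹

def Ik (k : ℕ) : Set ℝ := Set.Ioc (((2 : ℝ) ^ k)⁻¹ - dlt k) (((2 : ℝ) ^ k)⁻¹)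

def Sset : Set ℝ := ⋃ m : ℕ, Ik (m + 1)

def vF : ℝ → ℂ := Sset.indicator (fun θ => ((hgt (Nat.log 2 ⌊θ⁻¹⌋₊) : ℕ) : ℂ))

def myf : ℂ → ℂ := fun z => vF (Complex.arg z)

lemma dlt_pos (k : ℕ) : 0 < dlt k := by
  unfold dlt; positivity

lemma dlt_le (k : ℕ) (hk : 1 ≤ k) : dlt k ≤ ((2 : ℝ) ^ (k + 1))⁻¹ := by
  unfold dlt
  apply inv_anti₀ (by positivity)
  apply pow_le_pow_right₀ one_le_two
  nlinarith

lemma mem_Ik_bounds {k : ℕ} (hk : 1 ≤ k) {θ : ℝ} (hθ : θ ∈ Ik k) :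
    0 < θ ∧ θ ≤ ((2 : ℝ) ^ k)⁻¹ ∧ θ ≤ 1 / 2 := by
  obtain ⟨h1, h2⟩ := hθ
  have hd := dlt_le k hk
  have hpos : 0 < θ := by
    have hlt : ((2:ℝ) ^ (k+1))⁻¹ ≤ ((2:ℝ)^k)⁻¹ - dlt k := by
      have h4 : ((2:ℝ)^k)⁻¹ - ((2:ℝ)^(k+1))⁻¹ = ((2:ℝ)^(k+1))⁻¹ := by
        rw [pow_succ]
        field_simp
        ring
      linarith
    have : (0:ℝ) < ((2:ℝ)^(k+1))⁻¹ := by positivity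
    linarith
  refine ⟨hpos, h2, ?_⟩
  calc θ ≤ ((2:ℝ)^k)⁻¹ := h2
    _ ≤ ((2:ℝ)^1)⁻¹ := by
        apply inv_anti₀ (by positivity)
        exact pow_le_pow_right₀ one_le_two hk
    _ = 1/2 := by norm_num

lemma floor_inv_eq {k : ℕ} (hk : 1 ≤ k) {θ : ℝ} (hθ : θ ∈ Ik k) :
    ⌊θ⁻¹⌋₊ = 2 ^ k := by
  obtain ⟨hpos, h2, -⟩ := mem_Ik_bounds hk hθ
  rw [Nat.floor_eq_iff (by positivity)]
  constructor
  · push_cast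
    calc (2:ℝ)^k = (((2:ℝ)^k)⁻¹)⁻¹ := by rw [inv_inv]
      _ ≤ θ⁻¹ := inv_anti₀ hpos h2
  · push_cast
    have hlow : ((2:ℝ)^k + 1)⁻¹ < θ := by
      have key : dlt k < ((2:ℝ)^k)⁻¹ - ((2:ℝ)^k + 1)⁻¹ := by
        have heq : ((2:ℝ)^k)⁻¹ - ((2:ℝ)^k + 1)⁻¹ = ((2:ℝ)^k * ((2:ℝ)^k + 1))⁻¹ := by
          have hp : (0:ℝ) < (2:ℝ)^k := by positivity
          field_simp
          ring
        rw [heq]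
        unfold dlt
        apply inv_strictAnti₀ (by positivity)
        have h1 : (2:ℝ)^k + 1 < (2:ℝ)^(2*k^2) := by
          have e1 : (1:ℝ) < (2:ℝ)^k := one_lt_pow₀ one_lt_two (by omega)
          have e2 : (2:ℝ)^(k+1) ≤ (2:ℝ)^(2*k^2) := pow_le_pow_right₀ one_le_two (by nlinarith)
          have e3 : (2:ℝ)^(k+1) = 2^k * 2 := by rw [pow_succ]
          nlinarith
        calc (2:ℝ)^k * ((2:ℝ)^k + 1) < (2:ℝ)^k * (2:ℝ)^(2*k^2) := by
              have hp : (0:ℝ) < (2:ℝ)^k := by positivity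
              nlinarith
          _ = (2:ℝ)^(k + 2*k^2) := by rw [← pow_add]
      linarith [hθ.1]
    have hinvpos : (0:ℝ) < ((2:ℝ)^k + 1) := by positivity
    calc θ⁻¹ < (((2:ℝ)^k + 1)⁻¹)⁻¹ := by
          apply inv_strictAnti₀ (by positivity) hlow
      _ = (2:ℝ)^k + 1 := by rw [inv_inv]

lemma vF_eq {k : ℕ} (hk : 1 ≤ k) {θ : ℝ} (hθ : θ ∈ Ik k) :
    vF θ = ((hgt k : ℕ) : ℂ) := by
  have hmem : θ ∈ Sset := by
    apply Set.mem_iUnion.2 ⟨k - 1, ?_⟩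
    rwa [Nat.sub_add_cancel hk]
  rw [vF, Set.indicator_of_mem hmem, floor_inv_eq hk hθ, Nat.log_pow one_lt_two]

lemma notMem_Sset {θ : ℝ} (h : θ ≤ 0 ∨ 1 / 2 < θ) : θ ∉ Sset := by
  intro hmem
  obtain ⟨m, hm⟩ := Set.mem_iUnion.1 hmem
  obtain ⟨hpos, -, hle⟩ := mem_Ik_bounds (Nat.le_add_left 1 m) hm
  rcases h with h | h <;> linarith

lemma vF_zero {θ : ℝ} (h : θ ∉ Sset) : vF θ = 0 := Set.indicator_of_notMem h _

lemma measurable_vF : Measurable vF := by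
  apply Measurable.indicator
  · have h1 : Measurable fun θ : ℝ => Nat.log 2 ⌊θ⁻¹⌋₊ :=
      (measurable_from_top (f := Nat.log 2)).comp (Nat.measurable_floor.comp measurable_inv)
    exact (measurable_from_top (f := fun n : ℕ => ((hgt n : ℕ) : ℂ))).comp h1
  · exact MeasurableSet.iUnion fun m => measurableSet_Ioc

lemma measurable_myf : Measurable myf := measurable_vF.comp Complex.measurable_arg

lemma arg_exp {θ : ℝ} (hθ : θ ∈ Set.Ioc (-Real.pi) Real.pi) :
    Complex.arg (Complex.exp (θ * Complex.I)) = θ := by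
  rw [Complex.exp_mul_I]
  exact Complex.arg_cos_add_sin_mul_I hθ

lemma compose {θ : ℝ} (hθ : θ ∈ Set.Ioc 0 (2 * Real.pi)) :
    myf (Complex.exp (θ * Complex.I)) = vF θ := by
  have hpi := Real.pi_gt_three
  by_cases h : θ ≤ Real.pi
  · rw [myf, arg_exp ⟨by linarith [hθ.1], h⟩]
  · have h1 : Complex.exp (θ * Complex.I) = Complex.exp ((θ - 2 * Real.pi : ℝ) * Complex.I) := by
      push_cast
      rw [sub_mul, Complex.exp_sub, Complex.exp_two_pi_mul_I, div_one]
    rw [myf, h1, arg_exp ⟨by linarith [not_le.1 h], by linarith [hθ.2, Real.pi_pos]⟩,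
      vF_zero (notMem_Sset (Or.inl (by linarith [hθ.2]))),
      vF_zero (notMem_Sset (Or.inr (by linarith [not_le.1 h])))]


lemma enorm_sq_le (θ : ℝ) :
    (‖vF θ‖₊ : ℝ≥0∞) ^ (2 : ℕ) ≤
      ∑' m : ℕ, ((hgt (m + 1) : ℝ≥0∞)) ^ (2 : ℕ) *
        (Ik (m + 1)).indicator (fun _ => (1 : ℝ≥0∞)) θ := by
  by_cases h : θ ∈ Sset
  · obtain ⟨m, hm⟩ := Set.mem_iUnion.1 h
    have hv : vF θ = ((hgt (m + 1) : ℕ) : ℂ) := vF_eq (Nat.le_add_left 1 m) hm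
    have hterm : ((hgt (m + 1) : ℝ≥0∞)) ^ (2 : ℕ) *
        (Ik (m + 1)).indicator (fun _ => (1 : ℝ≥0∞)) θ = ((hgt (m + 1) : ℝ≥0∞)) ^ (2 : ℕ) := by
      rw [Set.indicator_of_mem hm, mul_one]
    calc (‖vF θ‖₊ : ℝ≥0∞) ^ (2 : ℕ) = ((hgt (m + 1) : ℝ≥0∞)) ^ (2 : ℕ) := by
          rw [hv]; norm_cast
      _ ≤ _ := hterm ▸ ENNReal.le_tsum m
  · rw [vF_zero h]
    simp

lemma term_eq (m : ℕ) :
    ((hgt (m + 1) : ℝ≥0∞)) ^ (2 : ℕ) * ENNReal.ofReal (dlt (m + 1)) =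
      ENNReal.ofReal (((2 : ℝ) ^ (m + 1))⁻¹) := by
  set K := m + 1
  have h1 : ((hgt K : ℝ≥0∞)) ^ (2 : ℕ) = ENNReal.ofReal ((hgt K : ℝ) ^ (2 : ℕ)) := by
    rw [ENNReal.ofReal_pow (by positivity)]
    norm_cast
  rw [h1, ← ENNReal.ofReal_mul (by positivity)]
  congr 1
  unfold hgt dlt
  push_cast
  have h2 : (2 : ℝ) ^ (K + 2 * K ^ 2) = 2 ^ K * ((2 : ℝ) ^ (K ^ 2)) ^ 2 := by
    rw [← pow_mul, ← pow_add]
    ring_nf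
  have hp : (0:ℝ) < (2:ℝ) ^ (K ^ 2) := by positivity
  have hq : (0:ℝ) < (2:ℝ) ^ K := by positivity
  rw [h2]
  field_simp <;> ring

lemma memLp_myf : MemLp myf 2 circleM := by
  refine ⟨measurable_myf.aestronglyMeasurable, ?_⟩
  rw [eLpNorm_eq_lintegral_rpow_enorm_toReal two_ne_zero ENNReal.ofNat_ne_top]
  simp only [enorm_eq_nnnorm]
  refine ENNReal.rpow_lt_top_of_nonneg (by norm_num) ?_
  have hrw : ∀ ζ : ℂ, (‖myf ζ‖₊ : ℝ≥0∞) ^ (2 : ℝ≥0∞).toReal = (‖myf ζ‖₊ : ℝ≥0∞) ^ (2 : ℕ) := by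
    intro ζ
    rw [ENNReal.toReal_ofNat, ← ENNReal.rpow_natCast]
    norm_num
  have hmeas2 : Measurable fun ζ : ℂ => (‖myf ζ‖₊ : ℝ≥0∞) ^ (2 : ℕ) :=
    (measurable_myf.nnnorm.coe_nnreal_ennreal).pow_const 2
  have hφ : Measurable fun θ : ℝ => Complex.exp (θ * Complex.I) :=
    Complex.continuous_exp.measurable.comp (Complex.measurable_ofReal.mul_const Complex.I)
  simp_rw [hrw]
  rw [circleM, lintegral_smul_measure, lintegral_map hmeas2 hφ]
  have hcongr : ∫⁻ θ in Set.Ioc 0 (2 * Real.pi), (‖myf (Complex.exp (θ * Complex.I))‖₊ : ℝ≥0∞) ^ (2 : ℕ)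
      = ∫⁻ θ in Set.Ioc 0 (2 * Real.pi), (‖vF θ‖₊ : ℝ≥0∞) ^ (2 : ℕ) := by
    apply setLIntegral_congr_fun measurableSet_Ioc
    intro θ hθ
    dsimp only
    rw [compose hθ]
  rw [hcongr]
  have hbound : ∫⁻ θ in Set.Ioc 0 (2 * Real.pi), (‖vF θ‖₊ : ℝ≥0∞) ^ (2 : ℕ) ≤ 2 := by
    calc ∫⁻ θ in Set.Ioc 0 (2 * Real.pi), (‖vF θ‖₊ : ℝ≥0∞) ^ (2 : ℕ)
        ≤ ∫⁻ θ, (‖vF θ‖₊ : ℝ≥0∞) ^ (2 : ℕ) := setLIntegral_le_lintegral _ _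
      _ ≤ ∫⁻ θ, ∑' m : ℕ, ((hgt (m + 1) : ℝ≥0∞)) ^ (2 : ℕ) *
            (Ik (m + 1)).indicator (fun _ => (1 : ℝ≥0∞)) θ := lintegral_mono enorm_sq_le
      _ = ∑' m : ℕ, ∫⁻ θ, ((hgt (m + 1) : ℝ≥0∞)) ^ (2 : ℕ) *
            (Ik (m + 1)).indicator (fun _ => (1 : ℝ≥0∞)) θ := by
          rw [lintegral_tsum]
          intro m
          exact (measurable_const.indicator measurableSet_Ioc).const_mul _ |>.aemeasurable
      _ = ∑' m : ℕ, ((hgt (m + 1) : ℝ≥0∞)) ^ (2 : ℕ) * volume (Ik (m + 1)) := by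
          apply tsum_congr
          intro m
          have hIk : MeasurableSet (Ik (m + 1)) := measurableSet_Ioc
          have hind : Measurable ((Ik (m + 1)).indicator (fun _ : ℝ => (1 : ℝ≥0∞))) :=
            measurable_const.indicator hIk
          rw [lintegral_const_mul _ hind, lintegral_indicator_const hIk, one_mul]
      _ = ∑' m : ℕ, ENNReal.ofReal (((2 : ℝ) ^ (m + 1))⁻¹) := by
          apply tsum_congr
          intro m
          rw [Ik, Real.volume_Ioc, sub_sub_cancel, term_eq]
      _ ≤ ∑' m : ℕ, ((2 : ℝ≥0∞))⁻¹ ^ m := by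
          apply ENNReal.tsum_le_tsum
          intro m
          calc ENNReal.ofReal (((2 : ℝ) ^ (m + 1))⁻¹)
              ≤ ENNReal.ofReal (((2 : ℝ) ^ m)⁻¹) := by
                apply ENNReal.ofReal_le_ofReal
                apply inv_anti₀ (by positivity)
                exact pow_le_pow_right₀ one_le_two (Nat.le_succ m)
            _ = (ENNReal.ofReal ((2 : ℝ) ^ m))⁻¹ := ENNReal.ofReal_inv_of_pos (by positivity)
            _ = ((2 : ℝ≥0∞) ^ m)⁻¹ := by
                rw [ENNReal.ofReal_pow (by norm_num)]
                norm_num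
            _ = ((2 : ℝ≥0∞))⁻¹ ^ m := by rw [ENNReal.inv_pow]
      _ = (1 - 2⁻¹)⁻¹ := ENNReal.tsum_geometric _
      _ = 2 := by rw [ENNReal.one_sub_inv_two]; simp
  apply ne_of_lt
  calc (ENNReal.ofReal (2 * Real.pi))⁻¹ *
        ∫⁻ θ in Set.Ioc 0 (2 * Real.pi), (‖vF θ‖₊ : ℝ≥0∞) ^ (2 : ℕ)
      ≤ (ENNReal.ofReal (2 * Real.pi))⁻¹ * 2 := by gcongr
    _ < ⊤ := ENNReal.mul_lt_top (ENNReal.inv_lt_top.2 (by positivity)) (by norm_num)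


lemma main_part2 (n : ℕ) (hn : 1 ≤ n) (ε : ℝ) (hε : 0 < ε) :
    ¬ EssBddOn (fun z => (z - 1) ^ n * myf z) (Metric.ball 1 ε) := by
  rintro ⟨C, hC⟩
  obtain ⟨m, hm⟩ := exists_nat_gt (max C (2 / ε))
  set K := m + 2 * n + 2 with hKdef
  have hK1 : 1 ≤ K := by omega
  have hKR : (K : ℝ) ≤ 2 ^ K := by exact_mod_cast (Nat.lt_two_pow_self (n := K)).le
  have hmKR : (m : ℝ) < (K : ℝ) := by exact_mod_cast (by omega : m < K)
  have hCK : C < (2 : ℝ) ^ K :=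
    lt_of_le_of_lt (le_max_left _ _) (lt_of_lt_of_le hm (le_trans hmKR.le hKR))
  have hεK : 2 * ((2 : ℝ) ^ K)⁻¹ < ε := by
    have h2e : 2 / ε < (2 : ℝ) ^ K :=
      lt_of_le_of_lt (le_max_right _ _) (lt_of_lt_of_le hm (le_trans hmKR.le hKR))
    have hp : (0 : ℝ) < 2 ^ K := by positivity
    have heq : 2 * ((2 : ℝ) ^ K)⁻¹ = 2 / 2 ^ K := by ring
    rw [heq, div_lt_iff₀ hp]
    rw [div_lt_iff₀ hε] at h2e
    linarith
  -- the bad arc on the circle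
  set T : Set ℂ := Metric.sphere (0 : ℂ) 1 ∩ (Complex.arg ⁻¹' Ik K) with hTdef
  have hTmeas : MeasurableSet T :=
    (isClosed_sphere.measurableSet).inter (Complex.measurable_arg measurableSet_Ioc)
  -- every point on the arc violates the bound
  have hsub : T ⊆ {ζ : ℂ | ¬ (ζ ∈ Metric.ball (1 : ℂ) ε →
      ‖(ζ - 1) ^ n * myf ζ‖ ≤ C)} := by
    rintro ζ ⟨hζs, hζa⟩
    have hζa' : Complex.arg ζ ∈ Ik K := hζa
    set θ := Complex.arg ζ with hθdef
    obtain ⟨hθpos, hθle, hθhalf⟩ := mem_Ik_bounds hK1 hζa'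
    have habs : ‖ζ‖ = 1 := by
      simpa [Complex.dist_eq] using (mem_sphere_zero_iff_norm.1 hζs)
    have hz : ζ = Complex.exp ((θ : ℂ) * Complex.I) := by
      have h := Complex.norm_mul_exp_arg_mul_I ζ
      rw [habs, Complex.ofReal_one, one_mul] at h
      exact h.symm
    have hd1 : ‖ζ - 1‖ ≤ 2 * θ := by
      rw [hz]
      have hle1 : ‖(θ : ℂ) * Complex.I‖ ≤ 1 := by
        simp only [norm_mul, Complex.norm_I, Complex.norm_real, Real.norm_eq_abs, mul_one]
        rw [abs_of_pos hθpos]; linarith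
      have := Complex.norm_exp_sub_one_le hle1
      simpa [norm_mul, Complex.norm_I, Complex.norm_real,
        abs_of_pos hθpos] using this
    have hball : ζ ∈ Metric.ball (1 : ℂ) ε := by
      rw [Metric.mem_ball, Complex.dist_eq]
      have h2K : (0:ℝ) < (2:ℝ) ^ K := by positivity
      calc ‖ζ - 1‖ = ‖ζ - 1‖ := rfl
        _ ≤ 2 * θ := hd1
        _ ≤ 2 * ((2:ℝ) ^ K)⁻¹ := by linarith
        _ < ε := hεK
    have hfv : myf ζ = ((hgt K : ℕ) : ℂ) := vF_eq hK1 hζa'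
    -- lower bound on |ζ - 1|
    have hθlow : ((2 : ℝ) ^ (K + 1))⁻¹ < θ := by
      have hd := dlt_le K hK1
      have h4 : ((2:ℝ) ^ K)⁻¹ - ((2:ℝ) ^ (K + 1))⁻¹ = ((2:ℝ) ^ (K + 1))⁻¹ := by
        rw [pow_succ]; field_simp; ring
      have := hζa'.1
      linarith
    have hsin : ((2 : ℝ) ^ (K + 2))⁻¹ ≤ ‖ζ - 1‖ := by
      have him : |(ζ - 1).im| ≤ ‖ζ - 1‖ := Complex.abs_im_le_norm _
      have himval : (ζ - 1).im = Real.sin θ := by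
        rw [hz]
        simp [Complex.exp_ofReal_mul_I_im]
      have hsin2 : θ / 2 ≤ Real.sin θ := by
        have hcube := Real.sin_gt_sub_cube hθpos
        have hsq : θ ^ 2 ≤ 1 / 4 := by nlinarith
        have h7 : θ ^ 3 ≤ θ * (1 / 4) := by nlinarith [mul_le_mul_of_nonneg_left hsq hθpos.le]
        nlinarith
      have hstep : ((2:ℝ) ^ (K + 2))⁻¹ ≤ θ / 2 := by
        have : ((2:ℝ) ^ (K + 2))⁻¹ = ((2:ℝ) ^ (K + 1))⁻¹ / 2 := by
          rw [pow_succ]; field_simp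
        rw [this]
        linarith
      calc ((2:ℝ) ^ (K + 2))⁻¹ ≤ θ / 2 := hstep
        _ ≤ Real.sin θ := hsin2
        _ = (ζ - 1).im := himval.symm
        _ ≤ |(ζ - 1).im| := le_abs_self _
        _ ≤ ‖ζ - 1‖ := him
    -- the norm is large
    have hnat : K + (K + 2) * n ≤ K ^ 2 := by nlinarith
    have hkey : (2 : ℝ) ^ K ≤ ‖(ζ - 1) ^ n * myf ζ‖ := by
      rw [norm_mul, norm_pow, hfv]
      have hnormh : ‖((hgt K : ℕ) : ℂ)‖ = ((hgt K : ℕ) : ℝ) := by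
        rw [Complex.norm_natCast]
      rw [hnormh]
      have h5 : (((2:ℝ) ^ (K + 2))⁻¹) ^ n ≤ ‖ζ - 1‖ ^ n :=
        pow_le_pow_left₀ (by positivity) hsin n
      have h6 : (2 : ℝ) ^ K ≤ (((2:ℝ) ^ (K + 2))⁻¹) ^ n * ((hgt K : ℕ) : ℝ) := by
        have hh : ((hgt K : ℕ) : ℝ) = (2:ℝ) ^ (K ^ 2) := by
          unfold hgt; push_cast; ring
        rw [hh, inv_pow, ← pow_mul]
        have heq2 : ((2:ℝ) ^ ((K + 2) * n))⁻¹ * (2:ℝ) ^ (K ^ 2)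
            = (2:ℝ) ^ (K ^ 2) / (2:ℝ) ^ ((K + 2) * n) := by ring
        rw [heq2, le_div_iff₀ (by positivity)]
        rw [← pow_add]
        apply pow_le_pow_right₀ one_le_two
        omega
      calc (2:ℝ) ^ K ≤ (((2:ℝ) ^ (K + 2))⁻¹) ^ n * ((hgt K : ℕ) : ℝ) := h6
        _ ≤ ‖ζ - 1‖ ^ n * ((hgt K : ℕ) : ℝ) := by
            apply mul_le_mul_of_nonneg_right h5 (by positivity)
    intro hP
    exact absurd (hP hball) (not_le.2 (lt_of_lt_of_le hCK hkey))
  -- the arc has measure zero                                                  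
  have hnull : circleM T = 0 := measure_mono_null hsub (ae_iff.1 hC)
  -- but its measure is positive
  have hφ : Measurable fun θ : ℝ => Complex.exp (θ * Complex.I) :=
    Complex.continuous_exp.measurable.comp (Complex.measurable_ofReal.mul_const Complex.I)
  have hpre : Ik K ⊆ (fun θ : ℝ => Complex.exp (θ * Complex.I)) ⁻¹' T := by
    intro θ hθ
    obtain ⟨hθpos, hθle, hθhalf⟩ := mem_Ik_bounds hK1 hθ
    have hpi := Real.pi_gt_three
    constructor
    · rw [mem_sphere_zero_iff_norm]
      exact Complex.norm_exp_ofReal_mul_I θ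
    · show Complex.arg (Complex.exp ((θ:ℂ) * Complex.I)) ∈ Ik K
      rw [arg_exp ⟨by linarith, by linarith⟩]
      exact hθ
  have hIoc : Ik K ⊆ Set.Ioc 0 (2 * Real.pi) := by
    intro θ hθ
    obtain ⟨hθpos, hθle, hθhalf⟩ := mem_Ik_bounds hK1 hθ
    have hpi := Real.pi_gt_three
    exact ⟨hθpos, by linarith⟩
  have hpos : circleM T ≠ 0 := by
    rw [circleM, Measure.smul_apply, smul_eq_mul,
      Measure.map_apply hφ hTmeas]
    apply mul_ne_zero
    · exact ENNReal.inv_ne_zero.2 ENNReal.ofReal_ne_top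
    · have hIkm : MeasurableSet (Ik K) := measurableSet_Ioc
      have h1 : ENNReal.ofReal (dlt K) =
          (volume.restrict (Set.Ioc 0 (2 * Real.pi))) (Ik K) := by
        rw [Measure.restrict_apply hIkm, Set.inter_eq_left.2 hIoc, Ik,
          Real.volume_Ioc, sub_sub_cancel]
      have h2 : (volume.restrict (Set.Ioc 0 (2 * Real.pi))) (Ik K) ≤
          (volume.restrict (Set.Ioc 0 (2 * Real.pi)))
            ((fun θ : ℝ => Complex.exp (θ * Complex.I)) ⁻¹' T) :=
        measure_mono hpre
      have h3 : (0 : ℝ≥0∞) < ENNReal.ofReal (dlt K) := ENNReal.ofReal_pos.2 (dlt_pos K)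
      exact (lt_of_lt_of_le (h1 ▸ h3) h2).ne'
  exact hpos hnull

end PoleAux

end

/-- There exists `f ∈ L²(𝕋)` such that for every `n ≥ 1` and every `ε > 0`,
`(z-1)^n f(z)` is not essentially bounded on `B_ε(1) ∩ 𝕋`. -/
theorem exists_L2_no_finite_order_pole :
    ∃ f : ℂ → ℂ, MemLp f 2 circleM ∧
      ∀ n : ℕ, 1 ≤ n → ∀ ε > (0 : ℝ),
        ¬ EssBddOn (fun z => (z - 1) ^ n * f z) (Metric.ball 1 ε) :=
  ⟨PoleAux.myf, PoleAux.memLp_myf, fun n hn ε hε => PoleAux.main_part2 n hn ε hε⟩
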